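/- Let Z be a nonnegative random variable on a probability space, and let N ≥ 3, λ > 0 and q ≥ 1 be real numbers, with m := ⌈q/2 − 1⌉ (a natural number). If P(Z > x) ≤ 2N·exp(−λ x²) for all x > 0, then E[Z^q] ≤ ((log N)/λ)^{q/2} · (1 + 3·q·m!). -/

import Mathlib

open MeasureTheory

section SubgaussianHelpers
open Real Set Filter

noncomputable def gsum (m : ℕ) (u : ℝ) : ℝ :=
  ∑ j ∈ Finset.range (m + 1), ((m.factorial : ℝ) / j.factorial) * u ^ j

lemma hasDerivAt_gsum (m : ℕ) (u : ℝ) :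
    HasDerivAt (gsum m) (gsum m u - u ^ m) u := by
  have h : HasDerivAt (gsum m)
      (∑ j ∈ Finset.range (m + 1),
        ((m.factorial : ℝ) / j.factorial) * (j * u ^ (j - 1))) u := by
    apply HasDerivAt.fun_sum
    intro j _
    exact (hasDerivAt_pow j u).const_mul _
  convert h using 1
  rw [Finset.sum_range_succ' (fun j => ((m.factorial : ℝ) / j.factorial) * (j * u ^ (j - 1)))]
  simp only [Nat.cast_zero, zero_mul, mul_zero, add_zero, Nat.add_sub_cancel]
  unfold gsum
  rw [Finset.sum_range_succ]
  have : ∀ i ∈ Finset.range m,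
      ((m.factorial : ℝ) / (i+1).factorial) * ((i+1 : ℕ) * u ^ i)
        = ((m.factorial : ℝ) / i.factorial) * u ^ i := by
    intro i _
    rw [Nat.factorial_succ]
    push_cast
    have hi : (i.factorial : ℝ) ≠ 0 := Nat.cast_ne_zero.mpr i.factorial_ne_zero
    field_simp
  rw [Finset.sum_congr rfl this]
  have hm : ((m.factorial : ℝ) / m.factorial) = 1 := by
    exact div_self (Nat.cast_ne_zero.mpr m.factorial_ne_zero)
  rw [hm]
  ring

lemma gamma_tail (m : ℕ) {lam : ℝ} (hlam : 0 < lam) (s : ℝ) :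
    ∫ t in Ioi s, t ^ (2*m+1) * Real.exp (-lam * t^2)
      = Real.exp (-(lam * s^2)) * gsum m (lam * s^2) / (2 * lam^(m+1)) := by
  have hderiv : ∀ t : ℝ, HasDerivAt
      (fun t : ℝ => -(Real.exp (-(lam*t^2)) * gsum m (lam*t^2)) / (2 * lam^(m+1)))
      (t ^ (2*m+1) * Real.exp (-lam * t^2)) t := by
    intro t
    have hu : HasDerivAt (fun t : ℝ => lam * t^2) (lam * (2*t)) t := by
      simpa using ((hasDerivAt_pow 2 t).const_mul lam)
    have he : HasDerivAt (fun u : ℝ => Real.exp (-u)) (-Real.exp (-(lam*t^2))) (lam*t^2) := by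
      simpa [Function.comp_def] using ((Real.hasDerivAt_exp (-(lam*t^2))).comp (lam*t^2) (hasDerivAt_neg (lam*t^2)))
    have hg : HasDerivAt (fun u : ℝ => Real.exp (-u) * gsum m u)
        (-(Real.exp (-(lam*t^2)) * (lam*t^2)^m)) (lam*t^2) := by
      have := he.mul (hasDerivAt_gsum m (lam*t^2))
      refine this.congr_deriv ?_
      ring
    have hcomp := (hg.comp t hu)
    have := ((hcomp.neg).div_const (2 * lam^(m+1)))
    refine this.congr_deriv ?_
    symm
    have hlne : (lam : ℝ) ≠ 0 := hlam.ne'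
    show t ^ (2*m+1) * Real.exp (-lam * t^2)
        = -(-(Real.exp (-(lam*t^2)) * (lam*t^2)^m) * (lam * (2*t))) / (2 * lam^(m+1))
    rw [mul_pow]
    have h2 : -lam * t^2 = -(lam * t^2) := by ring
    rw [h2]
    field_simp
    ring
  have hint : Integrable (fun t : ℝ => t ^ (2*m+1) * Real.exp (-lam * t^2)) := by
    have h1 := integrable_rpow_mul_exp_neg_mul_sq hlam
      (s := ((2*m+1 : ℕ) : ℝ)) (lt_of_lt_of_le (by norm_num) (Nat.cast_nonneg _))
    have : (fun t : ℝ => t ^ (((2*m+1 : ℕ) : ℝ)) * Real.exp (-lam * t^2))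
        = fun t : ℝ => t ^ (2*m+1) * Real.exp (-lam * t^2) := by
      funext t
      rw [Real.rpow_natCast]
    rwa [this] at h1
  have htend : Tendsto (fun t : ℝ => -(Real.exp (-(lam*t^2)) * gsum m (lam*t^2)) / (2 * lam^(m+1)))
      atTop (nhds 0) := by
    have h1 : Tendsto (fun u : ℝ => Real.exp (-u) * gsum m u) atTop (nhds 0) := by
      have : (fun u : ℝ => Real.exp (-u) * gsum m u)
          = fun u => ∑ j ∈ Finset.range (m+1),
              ((m.factorial : ℝ) / j.factorial) * (u ^ j * Real.exp (-u)) := by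
        funext u; unfold gsum
        rw [Finset.mul_sum]
        exact Finset.sum_congr rfl (fun j _ => by ring)
      rw [this]
      have : Tendsto (fun u : ℝ => ∑ j ∈ Finset.range (m+1),
          ((m.factorial : ℝ) / j.factorial) * (u ^ j * Real.exp (-u))) atTop
          (nhds (∑ j ∈ Finset.range (m+1), ((m.factorial : ℝ) / j.factorial) * 0)) := by
        apply tendsto_finset_sum
        intro j _
        exact (tendsto_pow_mul_exp_neg_atTop_nhds_zero j).const_mul _
      simpa using this
    have h2 : Tendsto (fun t : ℝ => lam * t^2) atTop atTop := by
      exact (tendsto_pow_atTop (by norm_num : 2 ≠ 0)).const_mul_atTop hlam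
    have := (h1.comp h2).neg.div_const (2 * lam^(m+1))
    simpa using this
  have key := integral_Ioi_of_hasDerivAt_of_tendsto' (a := s)
      (fun x _ => hderiv x) (hint.integrableOn) htend
  rw [key]
  ring

lemma gsum_le (m : ℕ) {L : ℝ} (hL : 1 ≤ L) :
    gsum m L ≤ 3 * m.factorial * L ^ m := by
  have hLm : (0:ℝ) ≤ (m.factorial : ℝ) * L ^ m := by positivity
  calc gsum m L ≤ ∑ j ∈ Finset.range (m+1),
        (m.factorial : ℝ) * L ^ m * ((1:ℝ) ^ j / j.factorial) := by
        apply Finset.sum_le_sum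
        intro j hj
        have hjm : j ≤ m := Nat.lt_succ_iff.mp (Finset.mem_range.mp hj)
        have heq : ((m.factorial:ℝ)/j.factorial) * L^j
            = (m.factorial:ℝ) * L^j * ((1:ℝ)^j/j.factorial) := by rw [one_pow]; ring
        rw [heq]
        apply mul_le_mul_of_nonneg_right
          (mul_le_mul_of_nonneg_left (pow_le_pow_right₀ hL hjm) (Nat.cast_nonneg _))
        positivity
    _ = (m.factorial : ℝ) * L ^ m * ∑ j ∈ Finset.range (m+1), ((1:ℝ) ^ j / j.factorial) := by
        rw [Finset.mul_sum]
    _ ≤ (m.factorial : ℝ) * L ^ m * Real.exp 1 :=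
        mul_le_mul_of_nonneg_left (Real.sum_le_exp_of_nonneg zero_le_one _) hLm
    _ ≤ 3 * m.factorial * L ^ m := by
        nlinarith [Real.exp_one_lt_d9, hLm]

lemma integrable_pow_mul_exp_neg_mul_sq' (m : ℕ) {lam : ℝ} (hlam : 0 < lam) :
    Integrable (fun t : ℝ => t ^ (2*m+1) * Real.exp (-lam * t^2)) := by
  have h1 := integrable_rpow_mul_exp_neg_mul_sq hlam
    (s := ((2*m+1 : ℕ) : ℝ)) (lt_of_lt_of_le (by norm_num) (Nat.cast_nonneg _))
  have : (fun t : ℝ => t ^ (((2*m+1 : ℕ) : ℝ)) * Real.exp (-lam * t^2))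
      = fun t : ℝ => t ^ (2*m+1) * Real.exp (-lam * t^2) := by
    funext t; rw [Real.rpow_natCast]
  rwa [this] at h1


end SubgaussianHelpers

open Real Set Filter in
/-- Moment bound: if the nonnegative random variable `Z` satisfies
`P(Z > x) ≤ 2N exp(−λ x²)` for all `x > 0` (with `N ≥ 3`, `λ > 0`, `q ≥ 1`,
`m = ⌈q/2 − 1⌉`), then `E[Z^q] ≤ ((log N)/λ)^{q/2} (1 + 3 q m!)`. -/
theorem subgaussian_moment_bound
    {Ω : Type*} [MeasurableSpace Ω] (P : Measure Ω) [IsProbabilityMeasure P]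
    (Z : Ω → ℝ) (hZmeas : Measurable Z) (hZnn : ∀ ω, 0 ≤ Z ω)
    (N lam q : ℝ) (hN : 3 ≤ N) (hlam : 0 < lam) (hq : 1 ≤ q)
    (htail : ∀ x : ℝ, 0 < x →
      P {ω | x < Z ω} ≤ ENNReal.ofReal (2 * N * Real.exp (-lam * x ^ 2))) :
    ∫⁻ ω, ENNReal.ofReal (Z ω ^ q) ∂P ≤
      ENNReal.ofReal ((Real.log N / lam) ^ (q / 2) *
        (1 + 3 * q * ((⌈q / 2 - 1⌉₊).factorial : ℝ))) := by
  have hN0 : (0:ℝ) < N := by linarith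
  set m : ℕ := ⌈q / 2 - 1⌉₊ with hmdef
  set L : ℝ := Real.log N with hLdef
  have hL1 : 1 < L := by
    rw [hLdef, Real.lt_log_iff_exp_lt hN0]
    calc Real.exp 1 < 2.7182818286 := Real.exp_one_lt_d9
      _ ≤ N := by linarith
  have hL0 : 0 < L := by linarith
  have hq0 : 0 < q := by linarith
  set x0 : ℝ := Real.sqrt (L / lam) with hx0def
  have hR0 : 0 < L / lam := div_pos hL0 hlam
  have hx0 : 0 < x0 := Real.sqrt_pos.mpr hR0
  have hx0sq : x0 ^ 2 = L / lam := Real.sq_sqrt hR0.le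
  have hlamx0 : lam * x0 ^ 2 = L := by rw [hx0sq]; field_simp
  have hmge : q / 2 - 1 ≤ (m : ℝ) := Nat.le_ceil _
  have hx0q : ∀ r : ℝ, x0 ^ r = (L / lam) ^ (r / 2) := by
    intro r
    rw [hx0def, Real.sqrt_eq_rpow, ← Real.rpow_mul hR0.le]
    congr 1; ring
  set e0 : ℝ := q - 1 - (2 * (m:ℝ) + 1) with he0def
  have he0 : e0 ≤ 0 := by rw [he0def]; linarith
  set c : ℝ := 2 * N * x0 ^ e0 with hcdef
  have hx0e0 : 0 < x0 ^ e0 := Real.rpow_pos_of_pos hx0 _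
  have hc0 : 0 ≤ c := by positivity
  -- layer cake
  rw [MeasureTheory.lintegral_rpow_eq_lintegral_meas_lt_mul P
    (Filter.Eventually.of_forall hZnn) hZmeas.aemeasurable hq0]
  rw [show (Ioi (0:ℝ)) = Ioc 0 x0 ∪ Ioi x0 from (Ioc_union_Ioi_eq_Ioi hx0.le).symm,
    lintegral_union measurableSet_Ioi Ioc_disjoint_Ioi_same]
  -- piece A
  have hA : ∫⁻ t in Ioc 0 x0, P {a | t < Z a} * ENNReal.ofReal (t ^ (q-1))
      ≤ ENNReal.ofReal ((L/lam) ^ (q/2) / q) := by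
    have hint : IntegrableOn (fun t : ℝ => t ^ (q-1)) (Ioc 0 x0) := by
      have h := intervalIntegral.intervalIntegrable_rpow' (a := 0) (b := x0)
        (by linarith : (-1:ℝ) < q - 1)
      rwa [intervalIntegrable_iff_integrableOn_Ioc_of_le hx0.le] at h
    have hnn : 0 ≤ᵐ[volume.restrict (Ioc 0 x0)] fun t : ℝ => t ^ (q-1) := by
      filter_upwards [ae_restrict_mem measurableSet_Ioc] with t ht
      exact Real.rpow_nonneg ht.1.le _
    calc ∫⁻ t in Ioc 0 x0, P {a | t < Z a} * ENNReal.ofReal (t ^ (q-1))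
        ≤ ∫⁻ t in Ioc 0 x0, ENNReal.ofReal (t ^ (q-1)) := by
          apply lintegral_mono
          intro t
          exact le_trans (mul_le_mul_left prob_le_one _) (by rw [one_mul])
      _ = ENNReal.ofReal (∫ t in Ioc 0 x0, t ^ (q-1)) :=
          (ofReal_integral_eq_lintegral_ofReal hint hnn).symm
      _ = ENNReal.ofReal ((L/lam) ^ (q/2) / q) := by
          congr 1
          rw [← intervalIntegral.integral_of_le hx0.le,
            _root_.integral_rpow (Or.inl (by linarith : (-1:ℝ) < q - 1)),
            Real.zero_rpow (by linarith : q - 1 + 1 ≠ 0), sub_add_cancel, sub_zero, hx0q q]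
  -- piece B
  have hB : ∫⁻ t in Ioi x0, P {a | t < Z a} * ENNReal.ofReal (t ^ (q-1))
      ≤ ENNReal.ofReal (c * (Real.exp (-(lam * x0^2)) * gsum m (lam * x0^2)
          / (2 * lam ^ (m+1)))) := by
    have hint : Integrable (fun t : ℝ => c * (t ^ (2*m+1) * Real.exp (-lam * t^2))) :=
      (integrable_pow_mul_exp_neg_mul_sq' m hlam).const_mul c
    have hmeas : Measurable (fun t : ℝ => ENNReal.ofReal (c * (t ^ (2*m+1)
        * Real.exp (-lam * t^2)))) := by
      apply ENNReal.measurable_ofReal.comp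
      exact (((measurable_id.pow_const _).mul
        ((measurable_id.pow_const 2).const_mul (-lam)).exp).const_mul c)
    calc ∫⁻ t in Ioi x0, P {a | t < Z a} * ENNReal.ofReal (t ^ (q-1))
        ≤ ∫⁻ t in Ioi x0, ENNReal.ofReal (c * (t ^ (2*m+1) * Real.exp (-lam * t^2))) := by
          apply setLIntegral_mono hmeas
          intro t ht
          have ht0 : 0 < t := hx0.trans ht
          calc P {a | t < Z a} * ENNReal.ofReal (t ^ (q-1))
              ≤ ENNReal.ofReal (2 * N * Real.exp (-lam * t^2)) * ENNReal.ofReal (t ^ (q-1)) :=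
                mul_le_mul_left (htail t ht0) _
            _ = ENNReal.ofReal (2 * N * Real.exp (-lam * t^2) * t ^ (q-1)) :=
                (ENNReal.ofReal_mul (by positivity)).symm
            _ ≤ ENNReal.ofReal (c * (t ^ (2*m+1) * Real.exp (-lam * t^2))) := by
                apply ENNReal.ofReal_le_ofReal
                have h1 : t ^ (q-1) = t ^ (2*m+1) * t ^ e0 := by
                  rw [← Real.rpow_natCast t (2*m+1), ← Real.rpow_add ht0]
                  congr 1
                  rw [he0def]
                  push_cast
                  ring
                have h2 : t ^ e0 ≤ x0 ^ e0 :=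
                  Real.rpow_le_rpow_of_nonpos hx0 ht.le he0
                calc 2 * N * Real.exp (-lam * t^2) * t ^ (q-1)
                    = (2 * N * Real.exp (-lam * t^2) * t ^ (2*m+1)) * t ^ e0 := by
                      rw [h1]; ring
                  _ ≤ (2 * N * Real.exp (-lam * t^2) * t ^ (2*m+1)) * x0 ^ e0 := by
                      apply mul_le_mul_of_nonneg_left h2
                      positivity
                  _ = c * (t ^ (2*m+1) * Real.exp (-lam * t^2)) := by
                      rw [hcdef]; ring
      _ = ENNReal.ofReal (∫ t in Ioi x0, c * (t ^ (2*m+1) * Real.exp (-lam * t^2))) := by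
          rw [ofReal_integral_eq_lintegral_ofReal hint.integrableOn]
          filter_upwards [ae_restrict_mem measurableSet_Ioi] with t ht
          have ht0 : 0 < t := hx0.trans ht
          positivity
      _ = ENNReal.ofReal (c * (Real.exp (-(lam * x0^2)) * gsum m (lam * x0^2)
          / (2 * lam ^ (m+1)))) := by
          rw [integral_const_mul, gamma_tail m hlam x0]
  calc ENNReal.ofReal q *
        ((∫⁻ t in Ioc 0 x0, P {a | t < Z a} * ENNReal.ofReal (t ^ (q-1))) +
         ∫⁻ t in Ioi x0, P {a | t < Z a} * ENNReal.ofReal (t ^ (q-1)))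
      ≤ ENNReal.ofReal q * (ENNReal.ofReal ((L/lam) ^ (q/2) / q) +
          ENNReal.ofReal (c * (Real.exp (-(lam * x0^2)) * gsum m (lam * x0^2)
          / (2 * lam ^ (m+1))))) := mul_le_mul_right (add_le_add hA hB) _
    _ = ENNReal.ofReal (q * ((L/lam) ^ (q/2) / q +
          c * (Real.exp (-(lam * x0^2)) * gsum m (lam * x0^2) / (2 * lam ^ (m+1))))) := by
        rw [← ENNReal.ofReal_add (by positivity) ?hb, ← ENNReal.ofReal_mul hq0.le]
        case hb =>
          have hg : 0 ≤ gsum m (lam * x0^2) := by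
            rw [hlamx0]
            unfold gsum
            apply Finset.sum_nonneg
            intro j _
            positivity
          positivity
    _ ≤ ENNReal.ofReal ((L / lam) ^ (q / 2) * (1 + 3 * q * (m.factorial : ℝ))) := by
        apply ENNReal.ofReal_le_ofReal
        have hE : Real.exp (-(lam * x0^2)) = N⁻¹ := by
          rw [hlamx0, hLdef, Real.exp_neg, Real.exp_log hN0]
        have hgs : gsum m (lam * x0^2) ≤ 3 * m.factorial * L ^ m := by
          rw [hlamx0]; exact gsum_le m hL1.le
        have hgs0 : 0 ≤ gsum m (lam * x0^2) := by
          unfold gsum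
          apply Finset.sum_nonneg
          intro j _
          have := hlamx0 ▸ hL0
          positivity
        set A : ℝ := (L / lam) ^ (q/2) with hAdef
        have hA0 : 0 ≤ A := Real.rpow_nonneg hR0.le _
        have hfac0 : (0:ℝ) ≤ m.factorial := Nat.cast_nonneg _
        have hkey : x0 ^ e0 * L ^ m / lam ^ (m+1) = A / L := by
          rw [hx0q e0]
          have h1 : e0 / 2 = q/2 - ((m:ℝ)+1) := by rw [he0def]; ring
          rw [h1, Real.rpow_sub hR0]
          have h3 : (L/lam) ^ ((m:ℝ)+1) = (L/lam) ^ (m+1 : ℕ) := by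
            rw [← Real.rpow_natCast]
            push_cast
            ring_nf
          rw [h3, div_pow, ← hAdef]
          have hlamne : lam ≠ 0 := hlam.ne'
          have hLne : L ≠ 0 := hL0.ne'
          field_simp
          ring
        have step1 : q * (A / q + c * (Real.exp (-(lam * x0^2)) * gsum m (lam * x0^2)
              / (2 * lam ^ (m+1))))
            = A + q * (x0 ^ e0 * gsum m (lam * x0^2) / lam ^ (m+1)) := by
          rw [hcdef, hE]
          have hlamne : (lam:ℝ) ^ (m+1) ≠ 0 := by positivity
          field_simp
        rw [step1]
        have step2 : q * (x0 ^ e0 * gsum m (lam * x0^2) / lam ^ (m+1))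
            ≤ q * (x0 ^ e0 * (3 * m.factorial * L ^ m) / lam ^ (m+1)) := by
          gcongr
        have step3 : x0 ^ e0 * (3 * m.factorial * L ^ m) / lam ^ (m+1)
            = 3 * m.factorial * (A / L) := by
          rw [← hkey]; ring
        have step4 : A / L ≤ A := div_le_self hA0 hL1.le
        calc A + q * (x0 ^ e0 * gsum m (lam * x0^2) / lam ^ (m+1))
            ≤ A + q * (3 * m.factorial * (A / L)) := by
              rw [← step3]; linarith [step2]
          _ ≤ A + q * (3 * m.factorial * A) := by
              have : (3:ℝ) * m.factorial * (A/L) ≤ 3 * m.factorial * A := by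
                apply mul_le_mul_of_nonneg_left step4 (by positivity)
              nlinarith
          _ = A * (1 + 3 * q * m.factorial) := by ring
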